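/- Let N ≥ 1 and let L be a positive operator on the N-partite Hilbert space H. Suppose the family of unit vectors a = (a_0, …, a_{N-1}) maximizes the expectation value ⟨P(b), L P(b)⟩ over all families b of unit vectors, and set Ψ = L P(a) and g = ⟨P(a), L P(a)⟩. Then g² = Σ_{k} |⟨P(a)[N-1 ↦ e_k], Ψ⟩|², where P(a)[N-1 ↦ e_k] denotes the product vector obtained from a by replacing its last component a_{N-1} with the k-th standard basis vector e_k of the last factor, and the sum runs over all k. Equivalently, g = √(⟨P(a₀,…,a_{N-2}), L' P(a₀,…,a_{N-2})⟩) where L' is the partial trace of |Ψ⟩⟨Ψ| over the last subsystem. (Theorem 1, Forward iteration.) -/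

import Mathlib

open scoped ComplexInnerProductSpace

/-- The product vector `P(a)` of a family of vectors, `P(a) i = ∏ j, a j (i j)`. -/
noncomputable def prodVec {N : ℕ} {d : Fin N → ℕ}
    (a : (j : Fin N) → EuclideanSpace ℂ (Fin (d j))) :
    EuclideanSpace ℂ ((j : Fin N) → Fin (d j)) :=
  WithLp.toLp 2 (fun i => ∏ j, a j (i j))

/-- **Theorem 1 (Forward iteration).**  If the family of unit vectors `a` maximizes
`⟨P(b), L P(b)⟩` over all families of unit vectors for a positive operator `L` on the
`(N+1)`-partite space (so the number of parties is at least one), and `Ψ = L P(a)`,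
`g = ⟨P(a), L P(a)⟩`, then `g² = Σ_k |⟨P(a)[last ↦ e_k], Ψ⟩|²`, i.e.
`g = √⟨P(a₀,…,a_{N-1}), L' P(a₀,…,a_{N-1})⟩` with `L'` the partial trace of `|Ψ⟩⟨Ψ|`
over the last subsystem. -/
theorem forward_iteration {N : ℕ} {d : Fin (N + 1) → ℕ} (hd : ∀ j, 1 ≤ d j)
    (L : EuclideanSpace ℂ ((j : Fin (N + 1)) → Fin (d j)) →L[ℂ]
        EuclideanSpace ℂ ((j : Fin (N + 1)) → Fin (d j)))
    (hLsa : IsSelfAdjoint L)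
    (hLpos : ∀ x : EuclideanSpace ℂ ((j : Fin (N + 1)) → Fin (d j)),
      x ≠ 0 → 0 < (⟪x, L x⟫).re)
    (a : (j : Fin (N + 1)) → EuclideanSpace ℂ (Fin (d j)))
    (ha : ∀ j, ‖a j‖ = 1)
    (hmax : ∀ b : (j : Fin (N + 1)) → EuclideanSpace ℂ (Fin (d j)),
      (∀ j, ‖b j‖ = 1) →
      (⟪prodVec b, L (prodVec b)⟫).re ≤ (⟪prodVec a, L (prodVec a)⟫).re)
    (Ψ : EuclideanSpace ℂ ((j : Fin (N + 1)) → Fin (d j)))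
    (hΨ : Ψ = L (prodVec a))
    (g : ℝ)
    (hg : g = (⟪prodVec a, L (prodVec a)⟫).re) :
    g ^ 2 = ∑ k : Fin (d (Fin.last N)),
      ‖⟪prodVec (Function.update a (Fin.last N) (EuclideanSpace.single k 1)), Ψ⟫‖ ^ 2 := by
  classical
  let Hs := EuclideanSpace ℂ (Fin (d (Fin.last N)))
  let H := EuclideanSpace ℂ ((j : Fin (N + 1)) → Fin (d j))
  -- the linear embedding v ↦ prodVec (a with last component v)
  let Tlin : Hs →ₗ[ℂ] H :=
    { toFun := fun v => (WithLp.toLp 2 (fun i => (∏ j : Fin N, a j.castSucc (i j.castSucc)) *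
        v (i (Fin.last N))) : EuclideanSpace ℂ ((j : Fin (N + 1)) → Fin (d j)))
      map_add' := by
        intro v w; ext i
        show _ * (v + w) (i (Fin.last N)) = _ * v _ + _ * w _
        rw [PiLp.add_apply]; ring
      map_smul' := by
        intro c v; ext i
        show _ * (c • v) (i (Fin.last N)) = c * (_ * v _)
        rw [PiLp.smul_apply, smul_eq_mul]; ring }
  let T : Hs →L[ℂ] H := LinearMap.toContinuousLinearMap Tlin
  have hT : ∀ v : Hs, T v = prodVec (Function.update a (Fin.last N) v) := by
    intro v
    ext i
    show (∏ j : Fin N, a j.castSucc (i j.castSucc)) * v (i (Fin.last N))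
      = ∏ j, Function.update a (Fin.last N) v j (i j)
    rw [Fin.prod_univ_castSucc]
    congr 1
    · exact Finset.prod_congr rfl fun j _ => by
        rw [Function.update_of_ne (Fin.castSucc_lt_last j).ne]
    · rw [Function.update_self]
  let a' : Hs := a (Fin.last N)
  have hTa' : T a' = prodVec a := by rw [hT, Function.update_eq_self]
  let M : Hs →L[ℂ] Hs := ContinuousLinearMap.adjoint T ∘L (L ∘L T)
  have hMsa : IsSelfAdjoint M := hLsa.adjoint_conj T
  have hMapp : ∀ v : Hs, M v = ContinuousLinearMap.adjoint T (L (T v)) := fun v => rfl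
  have hre : ∀ v : Hs, M.reApplyInnerSelf v = (⟪T v, L (T v)⟫).re := by
    intro v
    rw [ContinuousLinearMap.reApplyInnerSelf_apply, hMapp,
      ContinuousLinearMap.adjoint_inner_left]
    exact inner_re_symm _ _
  have hna' : ‖a'‖ = 1 := ha _
  have ha'0 : a' ≠ 0 := by intro h; rw [h, norm_zero] at hna'; simp at hna'
  have hmaxon : IsMaxOn M.reApplyInnerSelf (Metric.sphere (0 : Hs) ‖a'‖) a' := by
    intro x hx
    have hnx : ‖x‖ = 1 := by
      have := Metric.mem_sphere.mp hx
      rwa [dist_zero_right, hna'] at this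
    have hb : ∀ j, ‖Function.update a (Fin.last N) x j‖ = 1 := by
      intro j
      rcases eq_or_ne j (Fin.last N) with h | h
      · subst h; rw [Function.update_self]; exact hnx
      · rw [Function.update_of_ne h]; exact ha j
    simp only [Set.mem_setOf_eq]
    rw [hre, hre, hTa', hT]
    exact hmax _ hb
  have heig := hMsa.eq_smul_self_of_isLocalExtrOn (Or.inr hmaxon.localize)
  have hray : M.rayleighQuotient a' = g := by
    show M.reApplyInnerSelf a' / ‖a'‖ ^ 2 = g
    rw [hre, hTa', hna', hg, one_pow, div_one]
  rw [hray] at heig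
  -- now compute each inner product
  have hkey : ∀ k : Fin (d (Fin.last N)),
      ⟪prodVec (Function.update a (Fin.last N) (EuclideanSpace.single k 1)), Ψ⟫
        = (g : ℂ) * a' k := by
    intro k
    rw [← hT, hΨ, ← hTa', ← ContinuousLinearMap.adjoint_inner_right, ← hMapp, heig]
    rw [EuclideanSpace.inner_single_left]
    simp only [a', map_one, one_mul]
    show (g : ℂ) • a (Fin.last N) k = (g : ℂ) * a (Fin.last N) k
    rw [smul_eq_mul]
  simp only [hkey]
  have hsum : ∑ k : Fin (d (Fin.last N)), ‖a' k‖ ^ 2 = 1 := by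
    have h := EuclideanSpace.norm_eq a'
    rw [hna'] at h
    have h2 : Real.sqrt (∑ k, ‖a' k‖ ^ 2) = 1 := h.symm
    have := congrArg (· ^ 2) h2
    simpa [Real.sq_sqrt (Finset.sum_nonneg fun k _ => sq_nonneg _)] using this
  calc g ^ 2 = ∑ k : Fin (d (Fin.last N)), g ^ 2 * ‖a' k‖ ^ 2 := by
        rw [← Finset.mul_sum, hsum, mul_one]
    _ = ∑ k : Fin (d (Fin.last N)), ‖(g : ℂ) * a' k‖ ^ 2 := by
        refine Finset.sum_congr rfl fun k _ => ?_
        rw [norm_mul, mul_pow, Complex.norm_real, Real.norm_eq_abs, sq_abs]
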